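/- Let $m,n \geq 1$ and let $x_i^{(r)}$ (for $i \in \{1,\dots,m\}$ and $r \in \mathbb{Z}/n\mathbb{Z}$) be commuting indeterminates. Define the loop elementary symmetric function $E_k^{(r)} = \sum_{1 \le i_1 < \cdots < i_k \le m} x_{i_1}^{(r)} x_{i_2}^{(r+1)} \cdots x_{i_k}^{(r+k-1)}$ for $1 \le k \le m$, with $E_0^{(r)} = 1$ and $E_k^{(r)} = 0$ for $k < 0$ or $k > m$. For $\mathbf{y} = (y^{(1)},\dots,y^{(n)})$, let $\widetilde{W}(\mathbf{y})$ be the $n$-periodic $\mathbb{Z}\times\mathbb{Z}$ matrix with $\widetilde{W}(\mathbf{y})_{i+1,i} = 1$, $\widetilde{W}(\mathbf{y})_{i,i} = y^{(i \bmod n)}$, and all other entries zero. Let $\mathbf{x}_i = (x_i^{(i)}, x_i^{(i+1)},\dots,x_i^{(i+n-1)})$. Then the product $\widetilde{M} = \widetilde{W}(\mathbf{x}_1)\cdots\widetilde{W}(\mathbf{x}_m)$ satisfies $\widetilde{M}_{i,j} = E_{m+j-i}^{(i)}$ for all $i,j \in \mathbb{Z}$ (superscripts of $E$ interpreted mod $n$).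 -/

import Mathlib

open scoped Classical


/-- The loop elementary symmetric function `E_k^{(r)}` in `m` variables and `n` colors:
`E_k^{(r)} = ∑_{i₁ < ⋯ < i_k} x_{i₁}^{(r)} x_{i₂}^{(r+1)} ⋯ x_{i_k}^{(r+k-1)}`. -/
noncomputable def loopE (m n : ℕ) {R : Type*} [CommRing R]
    (x : Fin m → ZMod n → R) (k : ℕ) (r : ZMod n) : R :=
  ∑ f : {f : Fin k → Fin m // StrictMono f}, ∏ a : Fin k, x (f.1 a) (r + (a : ℕ))

lemma loopE_zero (m n : ℕ) {R : Type*} [CommRing R] (x : Fin m → ZMod n → R) (r : ZMod n) :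
    loopE m n x 0 r = 1 := by
  haveI : Unique {f : Fin 0 → Fin m // StrictMono f} :=
    ⟨⟨⟨finZeroElim, fun a => a.elim0⟩⟩, by rintro ⟨f, hf⟩; ext a; exact a.elim0⟩
  simp [loopE]

lemma loopE_of_gt (m n : ℕ) {R : Type*} [CommRing R] (x : Fin m → ZMod n → R) (k : ℕ)
    (r : ZMod n) (h : m < k) : loopE m n x k r = 0 := by
  haveI : IsEmpty {f : Fin k → Fin m // StrictMono f} := by
    constructor
    rintro ⟨f, hf⟩
    have := Fintype.card_le_of_injective f hf.injective
    simp at this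
    omega
  simp [loopE]

lemma loopE_succ (m n : ℕ) {R : Type*} [CommRing R] (x : Fin (m+1) → ZMod n → R)
    (k : ℕ) (r : ZMod n) :
    loopE (m+1) n x (k+1) r
      = x 0 r * loopE m n (fun t c => x t.succ (c+1)) k r
        + loopE m n (fun t c => x t.succ (c+1)) (k+1) (r-1) := by
  classical
  set φ : {g : Fin k → Fin m // StrictMono g} ⊕ {g : Fin (k+1) → Fin m // StrictMono g} →
      {f : Fin (k+1) → Fin (m+1) // StrictMono f} := fun s =>
    match s with
    | Sum.inl g => ⟨Fin.cons 0 (fun a => (g.1 a).succ), by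
        intro a b hab
        induction b using Fin.cases with
        | zero => exact absurd hab (Fin.not_lt_zero a)
        | succ b =>
          induction a using Fin.cases with
          | zero => simp [Fin.succ_pos]
          | succ a =>
            simp only [Fin.cons_succ]
            exact Fin.succ_lt_succ_iff.mpr (g.2 (Fin.succ_lt_succ_iff.mp hab))⟩
    | Sum.inr g => ⟨fun a => (g.1 a).succ, fun a b hab => Fin.succ_lt_succ_iff.mpr (g.2 hab)⟩
  have hbij : Function.Bijective φ := by
    constructor
    · rintro (⟨g, hg⟩ | ⟨g, hg⟩) (⟨g', hg'⟩ | ⟨g', hg'⟩) h <;>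
        simp only [φ, Subtype.mk.injEq] at h
      · refine congrArg Sum.inl (Subtype.ext (funext fun a => ?_))
        have := congrFun (Subtype.ext_iff.mp h) a.succ
        simp only [Fin.cons_succ] at this
        exact Fin.succ_injective _ this
      · have := congrFun (Subtype.ext_iff.mp h) 0
        simp only [Fin.cons_zero] at this
        exact absurd this.symm (Fin.succ_ne_zero _)
      · have := congrFun (Subtype.ext_iff.mp h) 0
        simp only [Fin.cons_zero] at this
        exact absurd this (Fin.succ_ne_zero _)
      · exact congrArg Sum.inr (Subtype.ext (funext fun a =>
          Fin.succ_injective _ (congrFun (Subtype.ext_iff.mp h) a)))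
    · rintro ⟨f, hf⟩
      by_cases h0 : f 0 = 0
      · have hne : ∀ a : Fin k, f a.succ ≠ 0 := by
          intro a
          have : f 0 < f a.succ := hf (Fin.succ_pos a)
          rw [h0] at this
          exact Fin.pos_iff_ne_zero.mp this
        refine ⟨Sum.inl ⟨fun a => (f a.succ).pred (hne a), ?_⟩, ?_⟩
        · intro a b hab
          rw [Fin.pred_lt_pred_iff]
          exact hf (Fin.succ_lt_succ_iff.mpr hab)
        · simp only [φ]
          ext a
          induction a using Fin.cases with
          | zero => simp [h0]
          | succ a => simp
      · have hne : ∀ a : Fin (k+1), f a ≠ 0 := by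
          intro a
          rcases eq_or_lt_of_le (Fin.zero_le a) with h | h
          · rw [← h]; exact h0
          · have : f 0 < f a := hf h
            exact Fin.pos_iff_ne_zero.mp (lt_of_le_of_lt (Fin.zero_le _) this)
        refine ⟨Sum.inr ⟨fun a => (f a).pred (hne a), ?_⟩, ?_⟩
        · intro a b hab
          rw [Fin.pred_lt_pred_iff]
          exact hf hab
        · simp only [φ]
          ext a
          simp
  rw [loopE, ← Fintype.sum_bijective φ hbij _ _ (fun _ => rfl), Fintype.sum_sum_type]
  congr 1
  · rw [loopE, Finset.mul_sum]
    refine Finset.sum_congr rfl fun g _ => ?_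
    simp only [φ]
    rw [Fin.prod_univ_succ]
    simp only [Fin.cons_zero, Fin.cons_succ, Fin.val_zero, Nat.cast_zero, add_zero]
    congr 1
    refine Finset.prod_congr rfl fun a _ => ?_
    congr 1
    push_cast [Fin.val_succ]
    ring
  · rw [loopE]
    refine Finset.sum_congr rfl fun g _ => ?_
    refine Finset.prod_congr rfl fun a _ => ?_
    simp only [φ]
    congr 1
    ring


/-- `E_k^{(r)}` extended to integer subscripts `k`, with value `0` for `k < 0`
(and automatically `0` for `k > m`). -/
noncomputable def loopEZ (m n : ℕ) {R : Type*} [CommRing R]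
    (x : Fin m → ZMod n → R) (k : ℤ) (r : ZMod n) : R :=
  if k < 0 then 0 else loopE m n x k.toNat r

lemma loopEZ_succ (m n : ℕ) {R : Type*} [CommRing R] (x : Fin (m+1) → ZMod n → R)
    (K : ℤ) (r : ZMod n) :
    loopEZ (m+1) n x (K+1) r
      = x 0 r * loopEZ m n (fun t c => x t.succ (c+1)) K r
        + loopEZ m n (fun t c => x t.succ (c+1)) (K+1) (r-1) := by
  rcases lt_trichotomy K (-1) with h | h | h
  · rw [loopEZ, if_pos (by omega), loopEZ, if_pos (by omega), loopEZ, if_pos (by omega)]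
    ring
  · subst h
    norm_num [loopEZ, loopE_zero]
  · have h0 : ¬ (K < 0) := by omega
    have h1 : ¬ (K + 1 < 0) := by omega
    rw [loopEZ, if_neg h1, loopEZ, if_neg h0, loopEZ, if_neg h1]
    have : (K + 1).toNat = K.toNat + 1 := by omega
    rw [this, loopE_succ]

/-- The product of the `n`-periodic whirl matrices `W̃(y₁) ⋯ W̃(y_t)` (each whirl
`W̃(y)` has `y^{(i mod n)}` in position `(i,i)`, `1` in position `(i+1,i)` and `0`
elsewhere), computed entrywise: `(W̃(y) · M)_{i,j} = y^{(i)} M_{i,j} + M_{i-1,j}`. -/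
noncomputable def whirlProd {R : Type*} [CommRing R] (n : ℕ) :
    List (ZMod n → R) → ℤ → ℤ → R
  | [], i, j => if i = j then 1 else 0
  | y :: rest, i, j =>
      y (i : ZMod n) * whirlProd n rest i j + whirlProd n rest (i - 1) j

/-- The whirl product identity: the `n`-periodic matrix
`M̃ = W̃(𝐱₁) ⋯ W̃(𝐱_m)`, where `𝐱_i = (x_i^{(i)}, x_i^{(i+1)}, …, x_i^{(i+n-1)})`
(so the whirl for row `i` has diagonal entry `x_i^{(i+c-1)}` at position `c`),
satisfies `M̃_{i,j} = E_{m+j-i}^{(i)}` for all `i, j ∈ ℤ`, superscripts mod `n`.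
Here rows are `1`-indexed via `t : Fin m ↦` paper row `t+1`. -/
theorem whirl_product_loopE (m n : ℕ) [NeZero n] (R : Type*) [CommRing R]
    (x : Fin m → ZMod n → R) :
    ∀ i j : ℤ,
      whirlProd n (List.ofFn fun t : Fin m => fun c : ZMod n => x t (c + (t : ℕ))) i j
        = loopEZ m n x ((m : ℤ) + j - i) ((i : ℤ) : ZMod n) := by
  induction m with
  | zero =>
    intro i j
    rw [List.ofFn_zero, whirlProd, loopEZ]
    by_cases hij : i = j
    · subst hij
      simp [loopE_zero]
    · rw [if_neg hij]
      rcases lt_or_gt_of_ne hij with h | h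
      · rw [if_neg (by omega), loopE_of_gt _ _ _ _ _ (by omega)]
      · rw [if_pos (by omega)]
  | succ m ih =>
    intro i j
    set x' : Fin m → ZMod n → R := fun t c => x t.succ (c+1) with hx'
    have hlist : (List.ofFn fun t : Fin (m+1) => fun c : ZMod n => x t (c + (t:ℕ)))
        = (fun c : ZMod n => x 0 (c + ((0 : Fin (m+1)) : ℕ))) ::
          (List.ofFn fun t : Fin m => fun c : ZMod n => x' t (c + (t:ℕ))) := by
      rw [List.ofFn_succ]
      congr 1
      refine congrArg List.ofFn (funext fun t => funext fun c => ?_)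
      simp only [hx', Fin.val_succ]
      congr 1
      push_cast
      ring
    rw [hlist, whirlProd, ih x' i j, ih x' (i-1) j]
    have e1 : (m : ℤ) + j - (i - 1) = ((m : ℤ) + j - i) + 1 := by ring
    have e2 : ((m+1 : ℕ) : ℤ) + j - i = ((m : ℤ) + j - i) + 1 := by push_cast; ring
    rw [e1, e2, loopEZ_succ]
    have e3 : ((i - 1 : ℤ) : ZMod n) = ((i : ℤ) : ZMod n) - 1 := by push_cast; ring
    rw [e3]
    simp [hx']
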